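/- Let h : ℝ × ℝ → ℝ be real-analytic on ℝ² and satisfy h(t, x) = (1/2) h(4t, 2x + t) for all t, x ∈ ℝ. Then h(0,0) = 0, the partial derivatives at the origin satisfy ∂h/∂t(0,0) = −(1/2) · ∂h/∂x(0,0), and for every n ≥ 2 the n-th iterated (Fréchet) derivative of h at the point (0,0) is the zero multilinear map (i.e., all partial derivatives of h of total order at least 2 vanish at the origin). -/

import Mathlib

noncomputable def stmt8A : (ℝ × ℝ) →L[ℝ] (ℝ × ℝ) :=
  (LinearMap.prod ((4:ℝ) • LinearMap.fst ℝ ℝ ℝ)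
    ((2:ℝ) • LinearMap.snd ℝ ℝ ℝ + LinearMap.fst ℝ ℝ ℝ)).toContinuousLinearMap

noncomputable def stmt8B : (ℝ × ℝ) →L[ℝ] (ℝ × ℝ) :=
  (LinearMap.prod ((1/4:ℝ) • LinearMap.fst ℝ ℝ ℝ)
    ((1/2:ℝ) • LinearMap.snd ℝ ℝ ℝ - (1/8:ℝ) • LinearMap.fst ℝ ℝ ℝ)).toContinuousLinearMap

lemma stmt8A_apply (p : ℝ × ℝ) : stmt8A p = (4 * p.1, 2 * p.2 + p.1) := by
  simp [stmt8A, mul_comm]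

lemma stmt8AB (p : ℝ × ℝ) : stmt8A (stmt8B p) = p := by
  obtain ⟨a, b⟩ := p
  simp [stmt8A, stmt8B, Prod.ext_iff]
  ring

lemma stmt8B_norm (p : ℝ × ℝ) : ‖stmt8B p‖ ≤ (5/8 : ℝ) * ‖p‖ := by
  have h1 : |p.1| ≤ ‖p‖ := by rw [Prod.norm_def]; exact le_max_left _ _
  have h2 : |p.2| ≤ ‖p‖ := by rw [Prod.norm_def]; exact le_max_right _ _
  have hB : stmt8B p = (1/4 * p.1, 1/2 * p.2 - 1/8 * p.1) := by simp [stmt8B]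
  rw [hB, Prod.norm_def]
  have ha := abs_nonneg p.1
  apply max_le
  · rw [Real.norm_eq_abs, abs_mul, abs_of_nonneg (by norm_num : (0:ℝ) ≤ 1/4)]
    linarith
  · rw [Real.norm_eq_abs]
    calc |1/2 * p.2 - 1/8 * p.1| ≤ |1/2 * p.2| + |1/8 * p.1| := abs_sub _ _
      _ = 1/2 * |p.2| + 1/8 * |p.1| := by
          rw [abs_mul, abs_mul, abs_of_nonneg (by norm_num : (0:ℝ) ≤ 1/2),
            abs_of_nonneg (by norm_num : (0:ℝ) ≤ 1/8)]
      _ ≤ 5/8 * ‖p‖ := by linarith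

lemma stmt8B_iter_norm (m : ℕ) (p : ℝ × ℝ) :
    ‖stmt8B^[m] p‖ ≤ (5/8 : ℝ)^m * ‖p‖ := by
  induction m with
  | zero => simp
  | succ m ih =>
    rw [Function.iterate_succ_apply']
    calc ‖stmt8B (stmt8B^[m] p)‖ ≤ 5/8 * ‖stmt8B^[m] p‖ := stmt8B_norm _
      _ ≤ 5/8 * ((5/8)^m * ‖p‖) := by
          have : (0:ℝ) ≤ 5/8 := by norm_num
          nlinarith [norm_nonneg (stmt8B^[m] p)]
      _ = (5/8)^(m+1) * ‖p‖ := by ring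

theorem stmt8 (h : ℝ → ℝ → ℝ)
    (hana : AnalyticOnNhd ℝ (Function.uncurry h) Set.univ)
    (heq : ∀ t x : ℝ, h t x = (1 / 2) * h (4 * t) (2 * x + t)) :
    h 0 0 = 0 ∧
    fderiv ℝ (Function.uncurry h) (0, 0) (1, 0) =
      -(1 / 2) * fderiv ℝ (Function.uncurry h) (0, 0) (0, 1) ∧
    ∀ n : ℕ, 2 ≤ n → iteratedFDeriv ℝ n (Function.uncurry h) (0, 0) = 0 := by
  set H := Function.uncurry h with hHdef
  have hsm : ContDiff ℝ (⊤ : ℕ∞) H := hana.contDiff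
  have hfun : ∀ p : ℝ × ℝ, H p = (1/2 : ℝ) * H (stmt8A p) := by
    intro p
    rw [stmt8A_apply]
    exact heq p.1 p.2
  have hA0 : stmt8A ((0:ℝ), (0:ℝ)) = (0, 0) := by rw [stmt8A_apply]; norm_num
  have h00 : h 0 0 = 0 := by
    have := heq 0 0
    norm_num at this
    linarith
  refine ⟨h00, ?_, ?_⟩
  · set D := fderiv ℝ H (0, 0) with hD
    have hd : HasFDerivAt H D (0, 0) :=
      ((hsm.differentiable (by simp)) (0,0)).hasFDerivAt
    have hd' : HasFDerivAt H D (stmt8A (0, 0)) := by rw [hA0]; exact hd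
    have hcomp : HasFDerivAt (fun p => (1/2 : ℝ) • H (stmt8A p))
        ((1/2 : ℝ) • (D.comp stmt8A)) (0, 0) :=
      (hd'.comp (0,0) stmt8A.hasFDerivAt).const_smul (1/2 : ℝ)
    have hEq : (fun p => (1/2 : ℝ) • H (stmt8A p)) = H := by
      funext p; rw [smul_eq_mul, ← hfun]
    rw [hEq] at hcomp
    have hDeq : D = (1/2 : ℝ) • (D.comp stmt8A) := hd.unique hcomp
    have h41 : stmt8A ((1:ℝ), (0:ℝ)) = (4, 1) := by rw [stmt8A_apply]; norm_num
    have hval := congrFun (congrArg DFunLike.coe hDeq) (1, 0)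
    simp only [ContinuousLinearMap.smul_apply, ContinuousLinearMap.comp_apply, h41,
      smul_eq_mul] at hval
    have hsplit : ((4:ℝ), (1:ℝ)) = (4:ℝ) • ((1:ℝ), (0:ℝ)) + ((0:ℝ), (1:ℝ)) := by
      simp [Prod.ext_iff]
    rw [hsplit, map_add, map_smul, smul_eq_mul] at hval
    linarith
  · intro n hn
    set T := iteratedFDeriv ℝ n H (0, 0) with hT
    have key : ∀ v : Fin n → ℝ × ℝ, T v = (1/2 : ℝ) * T (fun i => stmt8A (v i)) := by
      intro v
      have hHsmul : H = (1/2 : ℝ) • (H ∘ stmt8A) := by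
        funext p; rw [Pi.smul_apply, smul_eq_mul, Function.comp_apply, ← hfun]
      have e1 : iteratedFDeriv ℝ n H (0,0)
          = iteratedFDeriv ℝ n ((1/2 : ℝ) • (H ∘ stmt8A)) (0,0) := by rw [← hHsmul]
      have e2 : iteratedFDeriv ℝ n ((1/2 : ℝ) • (H ∘ stmt8A)) (0,0)
          = (1/2 : ℝ) • ((iteratedFDeriv ℝ n H (0,0)).compContinuousLinearMap
              fun _ => stmt8A) := by
        rw [iteratedFDeriv_const_smul_apply
          ((hsm.comp stmt8A.contDiff).of_le (m := n) (by exact_mod_cast le_top)).contDiffAt,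
          stmt8A.iteratedFDeriv_comp_right hsm _ (by exact_mod_cast le_top), hA0]
      have e3 : T = (1/2 : ℝ) • (T.compContinuousLinearMap fun _ => stmt8A) := by
        conv_lhs => rw [hT, e1, e2]
      calc T v = ((1/2 : ℝ) • (T.compContinuousLinearMap fun _ => stmt8A)) v := by
            rw [← e3]
        _ = (1/2 : ℝ) * T (fun i => stmt8A (v i)) := rfl
    have keyB : ∀ w : Fin n → ℝ × ℝ, T w = 2 * T (fun i => stmt8B (w i)) := by
      intro w
      have := key (fun i => stmt8B (w i))
      simp only [stmt8AB] at this
      linarith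
    have key2 : ∀ (w : Fin n → ℝ × ℝ) (m : ℕ),
        T w = (2:ℝ)^m * T (fun i => stmt8B^[m] (w i)) := by
      intro w m
      induction m with
      | zero => simp
      | succ m ih =>
        rw [ih, keyB (fun i => stmt8B^[m] (w i))]
        simp only [← Function.iterate_succ_apply']
        ring
    have hzero : ∀ w : Fin n → ℝ × ℝ, T w = 0 := by
      intro w
      have hbound : ∀ m : ℕ, ‖T w‖ ≤ ((2:ℝ) * (5/8)^n)^m * (‖T‖ * ∏ i, ‖w i‖) := by
        intro m
        rw [key2 w m]
        have hle : ‖T (fun i => stmt8B^[m] (w i))‖ ≤ ‖T‖ * ∏ i, ((5/8:ℝ)^m * ‖w i‖) := by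
          refine (T.le_opNorm _).trans
            (mul_le_mul_of_nonneg_left ?_ (norm_nonneg T))
          exact Finset.prod_le_prod (fun i _ => norm_nonneg _)
            (fun i _ => stmt8B_iter_norm m (w i))
        have hprod : (∏ i : Fin n, ((5/8:ℝ)^m * ‖w i‖))
            = ((5/8:ℝ)^m)^n * ∏ i, ‖w i‖ := by
          rw [Finset.prod_mul_distrib, Finset.prod_const, Finset.card_univ, Fintype.card_fin]
        rw [norm_mul, Real.norm_eq_abs, abs_pow, abs_of_nonneg (by norm_num : (0:ℝ) ≤ 2)]
        calc (2:ℝ)^m * ‖T (fun i => stmt8B^[m] (w i))‖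
            ≤ (2:ℝ)^m * (‖T‖ * (((5/8:ℝ)^m)^n * ∏ i, ‖w i‖)) := by
              rw [← hprod]
              exact mul_le_mul_of_nonneg_left hle (by positivity)
          _ = ((2:ℝ) * (5/8)^n)^m * (‖T‖ * ∏ i, ‖w i‖) := by
              rw [mul_pow, ← pow_mul, ← pow_mul, Nat.mul_comm]
              ring
      have hc : |(2:ℝ) * (5/8)^n| < 1 := by
        rw [abs_of_nonneg (by positivity)]
        calc (2:ℝ) * (5/8)^n ≤ 2 * (5/8)^2 := by
              have := pow_le_pow_of_le_one (by norm_num : (0:ℝ) ≤ 5/8)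
                (by norm_num : (5/8:ℝ) ≤ 1) hn
              linarith
          _ < 1 := by norm_num
      have htend : Filter.Tendsto
          (fun m : ℕ => ((2:ℝ) * (5/8)^n)^m * (‖T‖ * ∏ i, ‖w i‖)) Filter.atTop (nhds 0) := by
        have := tendsto_pow_atTop_nhds_zero_of_abs_lt_one hc
        simpa using this.mul_const (‖T‖ * ∏ i, ‖w i‖)
      have : ‖T w‖ ≤ 0 := ge_of_tendsto' htend hbound
      exact norm_le_zero_iff.mp this
    exact ContinuousMultilinearMap.ext fun w => hzero w
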